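/- Let X be a Tychonoff space and (λ_n) a sequence of finitely supported signed measures on X such that λ_n(f) → 0 for every continuous f : X → ℝ. Then the union S = ⋃_n supp(λ_n) is bounded in X, i.e., every continuous function φ : X → ℝ is bounded on S. -/

import Mathlib

open Filter Topology

private lemma stmt15_geom (m : ℕ) :
    ∑ j ∈ Finset.range m, (1/2 : ℝ)^(j+2) ≤ 1/2 := by
  have h : ∀ m : ℕ, ∑ j ∈ Finset.range m, (1/2 : ℝ)^(j+2) = 1/2 - (1/2)^(m+1) := by
    intro m
    induction m with
    | zero => simp
    | succ m ih => rw [Finset.sum_range_succ, ih]; ring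
  rw [h]
  have : (0:ℝ) ≤ (1/2)^(m+1) := by positivity
  linarith

private lemma stmt15_bump {X : Type*} [TopologicalSpace X] [T35Space X]
    (Φ : X → ℝ) (hΦ : Continuous Φ) (F : Finset X) (x : X) :
    ∃ ψ : X → ℝ, Continuous ψ ∧ ψ x = 1 ∧ (∀ y, 0 ≤ ψ y) ∧ (∀ y, ψ y ≤ 1) ∧
      (∀ y, 1/2 ≤ |Φ y - Φ x| → ψ y = 0) ∧ (∀ y ∈ F, y ≠ x → ψ y = 0) := by
  classical
  set K : Set X := {y | 1/2 ≤ |Φ y - Φ x|} ∪ ((F.erase x : Finset X) : Set X) with hK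
  have hKclosed : IsClosed K := by
    apply IsClosed.union
    · have : {y | 1/2 ≤ |Φ y - Φ x|} = (fun y => |Φ y - Φ x|) ⁻¹' (Set.Ici (1/2)) := rfl
      rw [this]
      exact IsClosed.preimage ((hΦ.sub continuous_const).abs) isClosed_Ici
    · exact (F.erase x).finite_toSet.isClosed
  have hxK : x ∉ K := by
    intro hx
    rcases hx with hx | hx
    · simp only [Set.mem_setOf_eq, sub_self, abs_zero] at hx; linarith
    · exact (Finset.notMem_erase x F) (by exact_mod_cast hx)
  obtain ⟨f, fcont, fx, fK⟩ := CompletelyRegularSpace.completely_regular x K hKclosed hxK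
  refine ⟨fun y => 1 - (f y : ℝ), continuous_const.sub (continuous_subtype_val.comp fcont),
    ?_, ?_, ?_, ?_, ?_⟩
  · show (1:ℝ) - (f x : ℝ) = 1
    rw [fx]; norm_num
  · intro y; have := (f y).2.2; simp only; linarith
  · intro y; have := (f y).2.1; simp only; linarith
  · intro y hy
    have h1 : f y = 1 := fK (Or.inl hy)
    show (1:ℝ) - (f y : ℝ) = 0
    rw [h1]; norm_num
  · intro y hy hyx
    have h1 : f y = 1 := fK (Or.inr (by exact_mod_cast Finset.mem_erase.mpr ⟨hyx, hy⟩))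
    show (1:ℝ) - (f y : ℝ) = 0
    rw [h1]; norm_num

/-- If `(λ_n)` is a sequence of finitely supported sign-measures on a Tychonoff space `X`
with `λ_n(f) → 0` for every continuous `f : X → ℝ`, then `S = ⋃_n supp(λ_n)` is bounded
in `X`: every continuous `φ : X → ℝ` is bounded on `S`. -/
theorem stmt_15 (X : Type*) [TopologicalSpace X] [T35Space X]
    (l : ℕ → (X →₀ ℝ))
    (hnull : ∀ f : C(X, ℝ),
      Tendsto (fun n => ∑ a ∈ (l n).support, (l n) a * f a) atTop (𝓝 0)) :
    ∀ φ : C(X, ℝ), ∃ M : ℝ, ∀ x ∈ ⋃ n, ((l n).support : Set X), |φ x| ≤ M := by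
  intro φ
  classical
  by_contra hc
  push_neg at hc
  set Φ : X → ℝ := fun x => |φ x| with hΦdef
  have Φcont : Continuous Φ := (map_continuous φ).abs
  -- the element type: (index, point, bump function)
  -- P: structural properties of a single stage
  set P : ℕ × X × (X → ℝ) → Prop := fun a =>
    a.2.1 ∈ (l a.1).support ∧ Continuous a.2.2 ∧ a.2.2 a.2.1 = 1 ∧
      (∀ y, 0 ≤ a.2.2 y) ∧ (∀ y, a.2.2 y ≤ 1) ∧
      (∀ y, 1/2 ≤ |Φ y - Φ a.2.1| → a.2.2 y = 0) ∧
      (∀ y ∈ (l a.1).support, y ≠ a.2.1 → a.2.2 y = 0) with hPdef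
  set r : ℕ × X × (X → ℝ) → ℕ × X × (X → ℝ) → Prop := fun a b =>
    a.1 < b.1 ∧ ∀ y ∈ (l a.1).support, Φ y + 2 ≤ Φ b.2.1 with hrdef
  have hEx : ∀ s : Finset (ℕ × X × (X → ℝ)), (∀ a ∈ s, P a) → ∃ b, P b ∧ ∀ a ∈ s, r a b := by
    intro s _
    -- bound exceeding Φ+2 on all supports with index ≤ m
    set m : ℕ := s.sup (fun a => a.1) with hm
    set U : Finset X := (Finset.range (m+1)).biUnion (fun i => (l i).support) with hU
    set B : ℝ := ∑ y ∈ U, |Φ y + 2| with hB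
    have hUB : ∀ y ∈ U, Φ y + 2 ≤ B := by
      intro y hy
      calc Φ y + 2 ≤ |Φ y + 2| := le_abs_self _
        _ ≤ B := Finset.single_le_sum (f := fun y => |Φ y + 2|) (fun i _ => abs_nonneg _) hy
    obtain ⟨x, hxS, hxB⟩ := hc B
    rw [Set.mem_iUnion] at hxS
    obtain ⟨n, hxn⟩ := hxS
    have hxn' : x ∈ (l n).support := hxn
    have hΦx : B < Φ x := hxB
    have hnm : m < n := by
      by_contra h
      push_neg at h
      have hxU : x ∈ U := by
        rw [hU]
        exact Finset.mem_biUnion.mpr ⟨n, Finset.mem_range.mpr (Nat.lt_succ_of_le h), hxn'⟩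
      have := hUB x hxU
      linarith
    obtain ⟨ψ, hcont, hψx, h0, h1, hband, hsupp⟩ := stmt15_bump Φ Φcont (l n).support x
    refine ⟨(n, x, ψ), ⟨hxn', hcont, hψx, h0, h1, hband, hsupp⟩, ?_⟩
    intro a ha
    constructor
    · exact lt_of_le_of_lt (Finset.le_sup (f := fun a => a.1) ha) hnm
    · intro y hy
      have hy' : y ∈ U := by
        rw [hU]
        exact Finset.mem_biUnion.mpr
          ⟨a.1, Finset.mem_range.mpr (Nat.lt_succ_of_le (Finset.le_sup (f := fun a => a.1) ha)), hy⟩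
      have := hUB y hy'
      linarith
  obtain ⟨g, hP, hr⟩ := exists_seq_of_forall_finset_exists P r hEx
  -- notation
  set nn : ℕ → ℕ := fun k => (g k).1 with hnn
  set xx : ℕ → X := fun k => (g k).2.1 with hxx
  set ψ : ℕ → X → ℝ := fun k => (g k).2.2 with hψ
  set cc : ℕ → ℝ := fun k => Φ (xx k) with hcc
  set al : ℕ → ℝ := fun k => l (nn k) (xx k) with hal
  set rr : ℕ → ℝ := fun k => |al k|⁻¹ with hrr
  have hmem : ∀ k, xx k ∈ (l (nn k)).support := fun k => (hP k).1
  have hψcont : ∀ k, Continuous (ψ k) := fun k => (hP k).2.1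
  have hψ1 : ∀ k, ψ k (xx k) = 1 := fun k => (hP k).2.2.1
  have hψ0 : ∀ k y, 0 ≤ ψ k y := fun k => (hP k).2.2.2.1
  have hψle : ∀ k y, ψ k y ≤ 1 := fun k => (hP k).2.2.2.2.1
  have hband : ∀ k y, 1/2 ≤ |Φ y - cc k| → ψ k y = 0 := fun k => (hP k).2.2.2.2.2.1
  have hsupp0 : ∀ k y, y ∈ (l (nn k)).support → y ≠ xx k → ψ k y = 0 :=
    fun k => (hP k).2.2.2.2.2.2
  have nmono : StrictMono nn := fun a b h => (hr a b h).1
  have hgap : ∀ j k, j < k → ∀ y ∈ (l (nn j)).support, Φ y + 2 ≤ cc k :=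
    fun j k h => (hr j k h).2
  have hcgap : ∀ j k, j < k → cc j + 2 ≤ cc k := fun j k h => hgap j k h _ (hmem j)
  have halne : ∀ k, al k ≠ 0 := fun k => Finsupp.mem_support_iff.mp (hmem k)
  -- smallness thresholds
  have hsmall : ∀ j : ℕ, ∃ N : ℕ, ∀ n ≥ N,
      |∑ a ∈ (l n).support, (l n) a * ψ j a| ≤ (1/2)^(j+2) * |al j| := by
    intro j
    have hε : (0:ℝ) < (1/2)^(j+2) * |al j| := by
      have := abs_pos.mpr (halne j); positivity
    have := hnull ⟨ψ j, hψcont j⟩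
    rw [NormedAddCommGroup.tendsto_nhds_zero] at this
    have := this _ hε
    rw [eventually_atTop] at this
    obtain ⟨N, hN⟩ := this
    exact ⟨N, fun n hn => le_of_lt (by simpa [Real.norm_eq_abs] using hN n hn)⟩
  choose N hN using hsmall
  -- the diagonal reindexing
  set N' : ℕ → ℕ := fun t => (Finset.range (t+1)).sup N with hN'
  set τ : ℕ → ℕ := fun m => Nat.rec 0 (fun _ t => max (t+1) (N' t)) m with hτ
  have hτsucc : ∀ m, τ (m+1) = max (τ m + 1) (N' (τ m)) := fun m => rfl
  have τmono : StrictMono τ := strictMono_nat_of_lt_succ (by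
    intro m; rw [hτsucc]; exact lt_of_lt_of_le (Nat.lt_succ_self _) (le_max_left _ _))
  have hτN : ∀ j m, j < m → N (τ j) ≤ τ m := by
    intro j m hjm
    obtain ⟨m', rfl⟩ : ∃ m', m = m' + 1 := ⟨m - 1, by omega⟩
    have h1 : τ j ≤ τ m' := τmono.monotone (by omega)
    have h2 : N (τ j) ≤ N' (τ m') :=
      Finset.le_sup (Finset.mem_range.mpr (by omega))
    rw [hτsucc]
    exact le_trans h2 (le_max_right _ _)
  have hsm : ∀ j m, j < m →
      |∑ a ∈ (l (nn (τ m))).support, (l (nn (τ m))) a * ψ (τ j) a|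
        ≤ (1/2)^(τ j + 2) * |al (τ j)| := by
    intro j m hjm
    apply hN (τ j)
    calc N (τ j) ≤ τ m := hτN j m hjm
      _ ≤ nn (τ m) := nmono.le_apply
  -- the total function
  set ψt : X → ℝ := fun y => ∑' m, rr (τ m) * ψ (τ m) y with hψt
  have honeband : ∀ (t₀ : ℝ) (m m' : ℕ), m ≠ m' →
      |cc (τ m) - t₀| < 3/4 → |cc (τ m') - t₀| < 3/4 → False := by
    intro t₀ m m' hne h1 h2
    rw [abs_lt] at h1 h2
    rcases hne.lt_or_gt with h | h
    · have := hcgap (τ m) (τ m') (τmono h); linarith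
    · have := hcgap (τ m') (τ m) (τmono h); linarith
  have ψtcont : Continuous ψt := by
    rw [continuous_iff_continuousAt]
    intro y₀
    set t₀ := Φ y₀ with ht₀
    have hUopen : IsOpen {y | |Φ y - t₀| < 1/4} :=
      IsOpen.preimage (X := X) ((Φcont.sub continuous_const).abs)
        (isOpen_Iio (a := (1/4 : ℝ)))
    have hUy₀ : {y | |Φ y - t₀| < 1/4} ∈ 𝓝 y₀ :=
      hUopen.mem_nhds (by simp [ht₀])
    by_cases hex : ∃ m, |cc (τ m) - t₀| < 3/4
    · obtain ⟨m₀, hm₀⟩ := hex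
      have key : ∀ y ∈ {y | |Φ y - t₀| < 1/4}, ψt y = rr (τ m₀) * ψ (τ m₀) y := by
        intro y hy
        apply tsum_eq_single
        intro m hm
        have h34 : 3/4 ≤ |cc (τ m) - t₀| := by
          by_contra h
          push_neg at h
          exact honeband t₀ m m₀ hm h hm₀
        have : 1/2 ≤ |Φ y - cc (τ m)| := by
          have htri : |cc (τ m) - t₀| ≤ |cc (τ m) - Φ y| + |Φ y - t₀| := abs_sub_le _ _ _
          have hy' : |Φ y - t₀| < 1/4 := hy
          rw [abs_sub_comm]
          linarith
        rw [hband _ _ this, mul_zero]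
      apply ContinuousAt.congr ((continuous_const.mul (hψcont (τ m₀))).continuousAt)
      exact Filter.eventuallyEq_of_mem hUy₀ (fun y hy => (key y hy).symm)
    · push_neg at hex
      have key : ∀ y ∈ {y | |Φ y - t₀| < 1/4}, ψt y = 0 := by
        intro y hy
        have : ∀ m, rr (τ m) * ψ (τ m) y = 0 := by
          intro m
          have : 1/2 ≤ |Φ y - cc (τ m)| := by
            have h34 := hex m
            have htri : |cc (τ m) - t₀| ≤ |cc (τ m) - Φ y| + |Φ y - t₀| := abs_sub_le _ _ _
            have hy' : |Φ y - t₀| < 1/4 := hy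
            rw [abs_sub_comm]
            linarith
          rw [hband _ _ this, mul_zero]
        rw [hψt]
        simp only [this]
        exact tsum_zero
      apply ContinuousAt.congr continuousAt_const
      exact Filter.eventuallyEq_of_mem hUy₀ (fun y hy => (key y hy).symm)
  -- evaluation of λ_{n_{τ m}} on ψt
  have keyeval : ∀ m : ℕ,
      (1:ℝ)/2 ≤ |∑ a ∈ (l (nn (τ m))).support, (l (nn (τ m))) a * ψt a| := by
    intro m
    set Λ : (X → ℝ) → ℝ := fun f => ∑ a ∈ (l (nn (τ m))).support, (l (nn (τ m))) a * f a
      with hΛ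
    have hfin : ∀ a ∈ (l (nn (τ m))).support,
        ψt a = ∑ j ∈ Finset.range (m+1), rr (τ j) * ψ (τ j) a := by
      intro a ha
      apply tsum_eq_sum
      intro j hj
      have hmj : m < j := by
        rw [Finset.mem_range] at hj; omega
      have h2 : Φ a + 2 ≤ cc (τ j) := hgap (τ m) (τ j) (τmono hmj) a ha
      have : 1/2 ≤ |Φ a - cc (τ j)| := by
        rw [abs_sub_comm, abs_of_nonneg (by linarith)]
        linarith
      rw [hband _ _ this, mul_zero]
    have hswap : Λ ψt = ∑ j ∈ Finset.range (m+1), rr (τ j) * Λ (ψ (τ j)) := by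
      calc Λ ψt
          = ∑ a ∈ (l (nn (τ m))).support,
              ∑ j ∈ Finset.range (m+1), rr (τ j) * ((l (nn (τ m))) a * ψ (τ j) a) := by
            apply Finset.sum_congr rfl
            intro a ha
            rw [hfin a ha, Finset.mul_sum]
            apply Finset.sum_congr rfl
            intro j _
            ring
        _ = ∑ j ∈ Finset.range (m+1), ∑ a ∈ (l (nn (τ m))).support,
              rr (τ j) * ((l (nn (τ m))) a * ψ (τ j) a) := Finset.sum_comm
        _ = ∑ j ∈ Finset.range (m+1), rr (τ j) * Λ (ψ (τ j)) := by
            apply Finset.sum_congr rfl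
            intro j _
            rw [Finset.mul_sum]
    have hlast : Λ (ψ (τ m)) = al (τ m) := by
      have h1 : Λ (ψ (τ m)) = (l (nn (τ m))) (xx (τ m)) * ψ (τ m) (xx (τ m)) := by
        apply Finset.sum_eq_single
        · intro b hb hbne
          rw [hsupp0 _ _ hb hbne, mul_zero]
        · intro h
          exact absurd (hmem (τ m)) h
      rw [h1, hψ1 (τ m), mul_one]
    have hlastabs : |rr (τ m) * al (τ m)| = 1 := by
      rw [abs_mul, hrr]
      simp only [abs_inv, abs_abs]
      exact inv_mul_cancel₀ (abs_ne_zero.mpr (halne (τ m)))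
    have hterm : ∀ j ∈ Finset.range m, |rr (τ j) * Λ (ψ (τ j))| ≤ (1/2 : ℝ)^(j+2) := by
      intro j hj
      rw [Finset.mem_range] at hj
      have h1 : |Λ (ψ (τ j))| ≤ (1/2)^(τ j + 2) * |al (τ j)| := hsm j m hj
      have h2 : |rr (τ j)| = |al (τ j)|⁻¹ := by
        rw [hrr]; simp [abs_inv]
      calc |rr (τ j) * Λ (ψ (τ j))| = |rr (τ j)| * |Λ (ψ (τ j))| := abs_mul _ _
        _ ≤ |al (τ j)|⁻¹ * ((1/2)^(τ j + 2) * |al (τ j)|) := by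
            rw [h2]
            exact mul_le_mul_of_nonneg_left h1 (by positivity)
        _ = (1/2)^(τ j + 2) := by
            rw [mul_comm ((1/2 : ℝ)^(τ j + 2)) _, ← mul_assoc,
              inv_mul_cancel₀ (abs_ne_zero.mpr (halne (τ j))), one_mul]
        _ ≤ (1/2)^(j+2) := by
            apply pow_le_pow_of_le_one (by norm_num) (by norm_num)
            have := τmono.le_apply (x := j)
            omega
    have hsum : |∑ j ∈ Finset.range m, rr (τ j) * Λ (ψ (τ j))| ≤ 1/2 := by
      calc |∑ j ∈ Finset.range m, rr (τ j) * Λ (ψ (τ j))|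
          ≤ ∑ j ∈ Finset.range m, |rr (τ j) * Λ (ψ (τ j))| := Finset.abs_sum_le_sum_abs _ _
        _ ≤ ∑ j ∈ Finset.range m, (1/2 : ℝ)^(j+2) := Finset.sum_le_sum hterm
        _ ≤ 1/2 := stmt15_geom m
    have hΛψt : Λ ψt = (∑ j ∈ Finset.range m, rr (τ j) * Λ (ψ (τ j)))
        + rr (τ m) * al (τ m) := by
      rw [hswap, Finset.sum_range_succ, hlast]
    set S := ∑ j ∈ Finset.range m, rr (τ j) * Λ (ψ (τ j)) with hS
    set L := rr (τ m) * al (τ m) with hL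
    have htri : |L| ≤ |S + L| + |S| := by
      calc |L| = |(S + L) + (-S)| := by ring_nf
        _ ≤ |S + L| + |(-S)| := abs_add_le _ _
        _ = |S + L| + |S| := by rw [abs_neg]
    show (1:ℝ)/2 ≤ |Λ ψt|
    rw [hΛψt]
    rw [hlastabs] at htri
    linarith
  -- final contradiction
  have htend : Tendsto (fun m => ∑ a ∈ (l (nn (τ m))).support, (l (nn (τ m))) a * ψt a)
      atTop (𝓝 0) := by
    have h1 := hnull ⟨ψt, ψtcont⟩
    exact h1.comp ((nmono.comp τmono).tendsto_atTop)
  rw [NormedAddCommGroup.tendsto_nhds_zero] at htend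
  have h2 := htend (1/2) (by norm_num)
  rw [eventually_atTop] at h2
  obtain ⟨m, hm⟩ := h2
  have h3 := hm m le_rfl
  have h4 := keyeval m
  rw [Real.norm_eq_abs] at h3
  linarith
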